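/- For all integers $n \ge k \ge 0$, the $k$-th derivative of the polynomial function $x \mapsto B_n^{(L,Y)}(x)$ satisfies $\Big(\frac{d}{dx}\Big)^k B_n^{(L,Y)}(x) = k!\sum_{j=0}^{n-k}\binom{n}{j} B_j^{(L,Y)}(x)\, L_Y(n-j,k)$ for every real $x$. In particular, for $k=1$ and $n \ge 1$, $\frac{d}{dx}B_n^{(L,Y)}(x) = \sum_{j=0}^{n-1}\binom{n}{j} E\big[\langle Y\rangle_{n-j}\big] B_j^{(L,Y)}(x)$. -/

import Mathlib

open MeasureTheory ProbabilityTheory Finset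

/-- The rising factorial `⟨x⟩_n = x (x+1) ⋯ (x+n-1)`, with `⟨x⟩_0 = 1`. -/
noncomputable def asc (x : ℝ) : ℕ → ℝ
  | 0 => 1
  | n + 1 => asc x n * (x + n)

/-- The probabilistic Lah numbers associated with the random variable `Y`, defined from
the iid copies `Ys` of `Y` via `L_Y(n,k) = (1/k!) ∑_{l=0}^k C(k,l) (-1)^{k-l} E[⟨S_l⟩_n]`,
where `S_l = Y_1 + ⋯ + Y_l`. -/
noncomputable def probLah {Ω : Type*} [MeasurableSpace Ω] (μ : Measure Ω)
    (Ys : ℕ → Ω → ℝ) (n k : ℕ) : ℝ :=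
  (k.factorial : ℝ)⁻¹ * ∑ l ∈ Finset.range (k + 1),
    (k.choose l : ℝ) * (-1) ^ (k - l) * ∫ ω, asc (∑ j ∈ Finset.range l, Ys j ω) n ∂μ

/-- The probabilistic Lah-Bell polynomials `B_n^{(L,Y)}(x) = ∑_{k=0}^n L_Y(n,k) x^k`. -/
noncomputable def probLahBell {Ω : Type*} [MeasurableSpace Ω] (μ : Measure Ω)
    (Ys : ℕ → Ω → ℝ) (n : ℕ) (x : ℝ) : ℝ :=
  ∑ k ∈ Finset.range (n + 1), probLah μ Ys n k * x ^ k

lemma asc_continuous (n : ℕ) : Continuous fun x : ℝ => asc x n := by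
  induction n with
  | zero => simpa [asc] using continuous_const
  | succ n ih => exact ih.mul (continuous_id.add continuous_const)

lemma abs_asc_le (x : ℝ) (n : ℕ) : |asc x n| ≤ (|x| + n) ^ n := by
  induction n with
  | zero => simp [asc]
  | succ n ih =>
    rw [asc, abs_mul]
    have h3 : |x + (n:ℝ)| ≤ |x| + (n+1:ℕ) := by
      have := abs_add_le x (n:ℝ)
      rw [Nat.abs_cast] at this
      push_cast
      linarith
    have h2 : (|x| + (n:ℝ)) ^ n ≤ (|x| + (n+1:ℕ):ℝ) ^ n := by
      apply pow_le_pow_left₀ (by positivity)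
      push_cast; linarith
    calc |asc x n| * |x + (n:ℝ)| ≤ (|x| + (n+1:ℕ):ℝ)^n * (|x| + (n+1:ℕ)) := by
          apply mul_le_mul (le_trans ih h2) h3 (abs_nonneg _) (by positivity)
      _ = (|x| + (n+1:ℕ):ℝ) ^ (n+1) := (pow_succ _ _).symm

lemma asc_add_eq (x y : ℝ) (n : ℕ) :
    asc (x + y) n = ∑ i ∈ range (n + 1), (n.choose i : ℝ) * asc x i * asc y (n - i) := by
  induction n with
  | zero => simp [asc]
  | succ n ih =>
    rw [asc, ih, Finset.sum_mul]
    have expand : ∀ i ∈ range (n+1),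
        (n.choose i : ℝ) * asc x i * asc y (n - i) * (x + y + n)
        = (n.choose i : ℝ) * (asc x (i+1) * asc y (n-i)) +
          (n.choose i : ℝ) * (asc x i * asc y (n-i+1)) := by
      intro i hi
      rw [mem_range] at hi
      have hle : i ≤ n := Nat.lt_succ_iff.mp hi
      have : x + y + (n:ℝ) = (x + i) + (y + (n - i : ℕ)) := by
        push_cast [hle]; ring
      rw [this, asc, asc]
      ring
    rw [Finset.sum_congr rfl expand, Finset.sum_add_distrib]
    have h1 : ∑ i ∈ range (n+1), (n.choose i : ℝ) * (asc x (i+1) * asc y (n-i))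
        = ∑ i ∈ range (n+2), (if i = 0 then 0 else (n.choose (i-1) : ℝ)) * (asc x i * asc y (n+1-i)) := by
      rw [Finset.sum_range_succ' (fun i => (if i = 0 then 0 else (n.choose (i-1) : ℝ)) * (asc x i * asc y (n+1-i))) (n+1)]
      simp [Nat.succ_sub_succ]
    have h2 : ∑ i ∈ range (n+1), (n.choose i : ℝ) * (asc x i * asc y (n-i+1))
        = ∑ i ∈ range (n+2), (if i = n+1 then 0 else (n.choose i : ℝ)) * (asc x i * asc y (n+1-i)) := by
      conv_rhs => rw [Finset.sum_range_succ]
      norm_num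
      apply Finset.sum_congr rfl
      intro i hi
      rw [mem_range] at hi
      rw [if_neg (by omega)]
      have e : n + 1 - i = n - i + 1 := by omega
      rw [e]
    rw [h1, h2, ← Finset.sum_add_distrib]
    apply Finset.sum_congr rfl
    intro i hi
    rw [mem_range] at hi
    rcases Nat.eq_zero_or_pos i with h0 | h0
    · subst h0; simp
    obtain ⟨m, rfl⟩ := Nat.exists_eq_succ_of_ne_zero (by omega : i ≠ 0)
    rcases Nat.lt_or_ge (m+1) (n+1) with hlt | hge
    · have e : n + 1 - (m+1) = n - m := by omega
      have e2 : m + 1 - 1 = m := by omega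
      rw [if_neg (by omega), if_neg (by omega), e, e2]
      push_cast [Nat.choose_succ_succ]
      ring
    · rw [if_neg (by omega), if_pos (show m + 1 = n + 1 by omega), zero_mul, add_zero]
      have e1 : m + 1 - 1 = m := by omega
      have e3 : m = n := by omega
      subst e3
      rw [e1]
      simp [Nat.choose_self]

lemma asc_zero_eq (n : ℕ) : asc 0 n = if n = 0 then 1 else 0 := by
  induction n with
  | zero => simp [asc]
  | succ n ih =>
    rw [asc, ih]
    rcases Nat.eq_zero_or_pos n with h | h
    · subst h; simp
    · simp [Nat.pos_iff_ne_zero.mp h]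

set_option linter.unusedSectionVars false

section Main

variable {Ω : Type*} [MeasurableSpace Ω] {μ : Measure Ω} [IsProbabilityMeasure μ]
  {Y : Ω → ℝ} {Ys : ℕ → Ω → ℝ} {r : ℝ}

lemma integrable_abs_pow (hY : Measurable Y) (hr : 0 < r)
    (hmgf : ∀ t : ℝ, |t| < r → Integrable (fun ω => Real.exp (t * Y ω)) μ) (n : ℕ) :
    Integrable (fun ω => |Y ω| ^ n) μ := by
  set t := r / 2 with ht_def
  have ht : 0 < t := by positivity
  have h1 := hmgf t (by rw [abs_of_pos ht]; simp only [ht_def]; linarith)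
  have h2 := hmgf (-t) (by rw [abs_neg, abs_of_pos ht]; simp only [ht_def]; linarith)
  have hg : Integrable
      (fun ω => (n.factorial / t^n) * (Real.exp (t * Y ω) + Real.exp (-t * Y ω))) μ :=
    (h1.add h2).const_mul _
  refine hg.mono' ((hY.abs.pow_const n).aestronglyMeasurable) ?_
  filter_upwards with ω
  rw [Real.norm_eq_abs, abs_of_nonneg (by positivity)]
  have e1 : Real.exp (t * |Y ω|) ≤ Real.exp (t * Y ω) + Real.exp (-t * Y ω) := by
    rcases abs_cases (Y ω) with ⟨h, _⟩ | ⟨h, _⟩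
    · rw [h]; linarith [Real.exp_pos (-t * Y ω)]
    · rw [h, mul_neg, ← neg_mul]; linarith [Real.exp_pos (t * Y ω)]
  have e2 : (t * |Y ω|) ^ n / n.factorial ≤ Real.exp (t * |Y ω|) :=
    Real.pow_div_factorial_le_exp (x := t * |Y ω|) (by positivity) n
  have hfac : (0:ℝ) < n.factorial := by positivity
  calc |Y ω| ^ n = (n.factorial / t^n) * ((t * |Y ω|) ^ n / n.factorial) := by
        rw [mul_pow]; field_simp
    _ ≤ (n.factorial / t^n) * (Real.exp (t * Y ω) + Real.exp (-t * Y ω)) := by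
        apply mul_le_mul_of_nonneg_left (e2.trans e1) (by positivity)

lemma integrable_asc_Y (hY : Measurable Y) (hr : 0 < r)
    (hmgf : ∀ t : ℝ, |t| < r → Integrable (fun ω => Real.exp (t * Y ω)) μ) (n : ℕ) :
    Integrable (fun ω => asc (Y ω) n) μ := by
  have hg : Integrable (fun ω => (|Y ω| + (n:ℝ))^n) μ := by
    have e : (fun ω => (|Y ω| + (n:ℝ))^n)
        = fun ω => ∑ i ∈ range (n+1), |Y ω|^i * ((n:ℝ)^(n-i) * (n.choose i : ℝ)) := by
      funext ω; rw [add_pow]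
      exact Finset.sum_congr rfl fun i _ => by ring
    rw [e]
    exact integrable_finset_sum _ fun i _ =>
      (integrable_abs_pow hY hr hmgf i).mul_const _
  refine hg.mono' (((asc_continuous n).measurable.comp hY).aestronglyMeasurable) ?_
  filter_upwards with ω
  rw [Real.norm_eq_abs]
  exact abs_asc_le _ _

lemma integrable_asc_Ys (hY : Measurable Y) (hid : ∀ j, IdentDistrib (Ys j) Y μ μ)
    (hr : 0 < r)
    (hmgf : ∀ t : ℝ, |t| < r → Integrable (fun ω => Real.exp (t * Y ω)) μ) (l n : ℕ) :
    Integrable (fun ω => asc (Ys l ω) n) μ :=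
  ((hid l).comp (asc_continuous n).measurable).integrable_iff.mpr
    (integrable_asc_Y hY hr hmgf n)

lemma integral_asc_Ys (hid : ∀ j, IdentDistrib (Ys j) Y μ μ) (l n : ℕ) :
    ∫ ω, asc (Ys l ω) n ∂μ = ∫ ω, asc (Y ω) n ∂μ :=
  ((hid l).comp (asc_continuous n).measurable).integral_eq

lemma indep_S_Ys (hYs : ∀ j, Measurable (Ys j))
    (hindep : iIndepFun Ys μ) (l : ℕ) (i m : ℕ) :
    IndepFun (fun ω => asc (∑ j ∈ range l, Ys j ω) i) (fun ω => asc (Ys l ω) m) μ := by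
  have h := hindep.indepFun_sum_range_succ hYs l
  have e : (∑ j ∈ range l, Ys j) = fun ω => ∑ j ∈ range l, Ys j ω := by
    funext ω; exact Finset.sum_apply ω (range l) Ys
  rw [e] at h
  exact h.comp (asc_continuous i).measurable (asc_continuous m).measurable

lemma integrable_asc_S (hY : Measurable Y) (hYs : ∀ j, Measurable (Ys j))
    (hid : ∀ j, IdentDistrib (Ys j) Y μ μ)
    (hindep : iIndepFun Ys μ) (hr : 0 < r)
    (hmgf : ∀ t : ℝ, |t| < r → Integrable (fun ω => Real.exp (t * Y ω)) μ) :
    ∀ l n, Integrable (fun ω => asc (∑ j ∈ range l, Ys j ω) n) μ := by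
  intro l
  induction l with
  | zero =>
    intro n
    simpa [asc_zero_eq] using (integrable_const (if n = 0 then (1:ℝ) else 0) (μ := μ))
  | succ l ih =>
    intro n
    have e : (fun ω => asc (∑ j ∈ range (l+1), Ys j ω) n)
        = fun ω => ∑ i ∈ range (n+1), (n.choose i : ℝ) *
            (asc (∑ j ∈ range l, Ys j ω) i * asc (Ys l ω) (n - i)) := by
      funext ω
      rw [Finset.sum_range_succ, asc_add_eq]
      exact Finset.sum_congr rfl fun i _ => by ring
    rw [e]
    refine integrable_finset_sum _ fun i _ => Integrable.const_mul ?_ _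
    exact (indep_S_Ys hYs hindep l i (n-i)).integrable_mul (ih i)
      (integrable_asc_Ys hY hid hr hmgf l (n-i))

lemma M_succ (hY : Measurable Y) (hYs : ∀ j, Measurable (Ys j))
    (hid : ∀ j, IdentDistrib (Ys j) Y μ μ)
    (hindep : iIndepFun Ys μ) (hr : 0 < r)
    (hmgf : ∀ t : ℝ, |t| < r → Integrable (fun ω => Real.exp (t * Y ω)) μ) (l n : ℕ) :
    ∫ ω, asc (∑ j ∈ range (l+1), Ys j ω) n ∂μ
      = ∑ i ∈ range (n+1), (n.choose i : ℝ) *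
          (∫ ω, asc (∑ j ∈ range l, Ys j ω) i ∂μ) * (∫ ω, asc (Y ω) (n - i) ∂μ) := by
  have e : (fun ω => asc (∑ j ∈ range (l+1), Ys j ω) n)
      = fun ω => ∑ i ∈ range (n+1), (n.choose i : ℝ) *
          (asc (∑ j ∈ range l, Ys j ω) i * asc (Ys l ω) (n - i)) := by
    funext ω
    rw [Finset.sum_range_succ, asc_add_eq]
    exact Finset.sum_congr rfl fun i _ => by ring
  have hint : ∀ i ∈ range (n+1), Integrable (fun ω => (n.choose i : ℝ) *
      (asc (∑ j ∈ range l, Ys j ω) i * asc (Ys l ω) (n - i))) μ := by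
    intro i _
    exact Integrable.const_mul ((indep_S_Ys hYs hindep l i (n-i)).integrable_mul
      (integrable_asc_S hY hYs hid hindep hr hmgf l i)
      (integrable_asc_Ys hY hid hr hmgf l (n-i))) _
  rw [e, integral_finset_sum _ hint]
  refine Finset.sum_congr rfl fun i _ => ?_
  have h' : (∫ a, asc (∑ j ∈ range l, Ys j a) i * asc (Ys l a) (n - i) ∂μ)
      = (∫ ω, asc (∑ j ∈ range l, Ys j ω) i ∂μ) * ∫ ω, asc (Ys l ω) (n - i) ∂μ :=
    (indep_S_Ys hYs hindep l i (n-i)).integral_fun_mul_eq_mul_integral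
      (integrable_asc_S hY hYs hid hindep hr hmgf l i).aestronglyMeasurable
      (integrable_asc_Ys hY hid hr hmgf l (n-i)).aestronglyMeasurable
  rw [integral_const_mul, h', integral_asc_Ys hid l (n-i), mul_assoc]

end Main

section PS

variable {Ω : Type*} [MeasurableSpace Ω] {μ : Measure Ω} [IsProbabilityMeasure μ]
  {Y : Ω → ℝ} {Ys : ℕ → Ω → ℝ} {r : ℝ}

/-- EGF of the moments of `Y` w.r.t. rising factorials. -/
noncomputable def Gser (μ : Measure Ω) (Y : Ω → ℝ) : PowerSeries ℝ :=
  PowerSeries.mk fun n => (∫ ω, asc (Y ω) n ∂μ) / n.factorial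

lemma Fl_pow (hY : Measurable Y) (hYs : ∀ j, Measurable (Ys j))
    (hid : ∀ j, IdentDistrib (Ys j) Y μ μ)
    (hindep : iIndepFun Ys μ) (hr : 0 < r)
    (hmgf : ∀ t : ℝ, |t| < r → Integrable (fun ω => Real.exp (t * Y ω)) μ) (l : ℕ) :
    (PowerSeries.mk fun n => (∫ ω, asc (∑ j ∈ range l, Ys j ω) n ∂μ) / n.factorial)
      = (Gser μ Y) ^ l := by
  induction l with
  | zero =>
    ext n
    rw [pow_zero, PowerSeries.coeff_mk, PowerSeries.coeff_one]
    simp only [Finset.sum_range_zero, asc_zero_eq]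
    by_cases h : n = 0
    · simp [h]
    · simp [h]
  | succ l ih =>
    rw [pow_succ, ← ih]
    ext n
    rw [PowerSeries.coeff_mk, PowerSeries.coeff_mul,
      Finset.Nat.sum_antidiagonal_eq_sum_range_succ_mk,
      M_succ hY hYs hid hindep hr hmgf l n, Finset.sum_div]
    refine Finset.sum_congr rfl fun i hi => ?_
    rw [mem_range] at hi
    have hle : i ≤ n := Nat.lt_succ_iff.mp hi
    simp only [PowerSeries.coeff_mk, Gser]
    have hfac : ((n.choose i : ℝ)) * (i.factorial : ℝ) * ((n-i).factorial : ℝ)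
        = (n.factorial : ℝ) := by
      exact_mod_cast congrArg (Nat.cast (R := ℝ)) (Nat.choose_mul_factorial_mul_factorial hle)
    rw [div_mul_div_comm, div_eq_div_iff (by positivity) (by positivity), ← hfac]
    ring

lemma Lah_ser (hY : Measurable Y) (hYs : ∀ j, Measurable (Ys j))
    (hid : ∀ j, IdentDistrib (Ys j) Y μ μ)
    (hindep : iIndepFun Ys μ) (hr : 0 < r)
    (hmgf : ∀ t : ℝ, |t| < r → Integrable (fun ω => Real.exp (t * Y ω)) μ) (k : ℕ) :
    (PowerSeries.mk fun n => (k.factorial : ℝ) * probLah μ Ys n k / n.factorial)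
      = (Gser μ Y - 1) ^ k := by
  rw [sub_pow]
  ext n
  rw [PowerSeries.coeff_mk, map_sum]
  have hterm : ∀ m, m ∈ range (k+1) →
      (PowerSeries.coeff n) ((-1 : PowerSeries ℝ) ^ (m + k) * (Gser μ Y) ^ m
          * (1 : PowerSeries ℝ) ^ (k - m) * (k.choose m : PowerSeries ℝ))
        = (-1 : ℝ) ^ (k - m) * (k.choose m : ℝ) *
            ((∫ ω, asc (∑ j ∈ range m, Ys j ω) n ∂μ) / n.factorial) := by
    intro m hm
    rw [mem_range] at hm
    have hle : m ≤ k := Nat.lt_succ_iff.mp hm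
    have e1 : ((-1 : PowerSeries ℝ) ^ (m + k) * (Gser μ Y) ^ m
          * (1 : PowerSeries ℝ) ^ (k - m) * (k.choose m : PowerSeries ℝ))
        = PowerSeries.C ((-1 : ℝ) ^ (m + k) * (k.choose m : ℝ)) * (Gser μ Y) ^ m := by
      rw [one_pow, mul_one, map_mul]
      have : (-1 : PowerSeries ℝ) ^ (m+k) = PowerSeries.C ((-1 : ℝ) ^ (m+k)) := by
        rw [map_pow, map_neg, map_one]
      rw [this]
      have : ((k.choose m : ℕ) : PowerSeries ℝ) = PowerSeries.C ((k.choose m : ℝ)) := by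
        rw [← Nat.cast_id (k.choose m), map_natCast, Nat.cast_id]
      rw [this]
      ring
    rw [e1, PowerSeries.coeff_C_mul, ← Fl_pow hY hYs hid hindep hr hmgf m,
      PowerSeries.coeff_mk]
    have : (-1 : ℝ) ^ (m + k) = (-1 : ℝ) ^ (k - m) := by
      rw [show m + k = (k - m) + 2 * m by omega, pow_add, pow_mul]
      norm_num
    rw [this]
  rw [Finset.sum_congr rfl hterm]
  rw [probLah]
  have hk : (k.factorial : ℝ) ≠ 0 := by positivity
  rw [← mul_assoc, mul_inv_cancel₀ hk, one_mul, Finset.sum_div]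
  exact Finset.sum_congr rfl fun m _ => by ring

lemma Lah_vanish (hY : Measurable Y) (hYs : ∀ j, Measurable (Ys j))
    (hid : ∀ j, IdentDistrib (Ys j) Y μ μ)
    (hindep : iIndepFun Ys μ) (hr : 0 < r)
    (hmgf : ∀ t : ℝ, |t| < r → Integrable (fun ω => Real.exp (t * Y ω)) μ)
    {n k : ℕ} (h : n < k) : probLah μ Ys n k = 0 := by
  have hconst : PowerSeries.constantCoeff (Gser μ Y - 1) = 0 := by
    rw [map_sub, map_one]
    have : PowerSeries.constantCoeff (Gser μ Y)
        = (∫ ω, asc (Y ω) 0 ∂μ) / (Nat.factorial 0) := by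
      rw [Gser, ← PowerSeries.coeff_zero_eq_constantCoeff_apply, PowerSeries.coeff_mk]
    rw [this]
    simp [asc]
  have hdvd : (PowerSeries.X : PowerSeries ℝ) ^ k ∣ (Gser μ Y - 1) ^ k :=
    pow_dvd_pow_of_dvd (PowerSeries.X_dvd_iff.mpr hconst) k
  have hcoeff := (PowerSeries.X_pow_dvd_iff.mp hdvd) n h
  rw [← Lah_ser hY hYs hid hindep hr hmgf k, PowerSeries.coeff_mk] at hcoeff
  have hk : (k.factorial : ℝ) ≠ 0 := by positivity
  have hn : (n.factorial : ℝ) ≠ 0 := by positivity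
  rcases div_eq_zero_iff.mp hcoeff with h2 | h2
  · rcases mul_eq_zero.mp h2 with h3 | h3
    · exact absurd h3 hk
    · exact h3
  · exact absurd h2 hn

lemma key_conv (hY : Measurable Y) (hYs : ∀ j, Measurable (Ys j))
    (hid : ∀ j, IdentDistrib (Ys j) Y μ μ)
    (hindep : iIndepFun Ys μ) (hr : 0 < r)
    (hmgf : ∀ t : ℝ, |t| < r → Integrable (fun ω => Real.exp (t * Y ω)) μ) (m k n : ℕ) :
    (((m+k).factorial : ℝ)) * probLah μ Ys n (m+k)
      = ∑ j ∈ range (n+1), (n.choose j : ℝ)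
          * ((m.factorial : ℝ) * probLah μ Ys j m)
          * ((k.factorial : ℝ) * probLah μ Ys (n-j) k) := by
  have hmul : (PowerSeries.mk fun n => (m.factorial : ℝ) * probLah μ Ys n m / n.factorial)
      * (PowerSeries.mk fun n => (k.factorial : ℝ) * probLah μ Ys n k / n.factorial)
      = PowerSeries.mk fun n => ((m+k).factorial : ℝ) * probLah μ Ys n (m+k) / n.factorial := by
    rw [Lah_ser hY hYs hid hindep hr hmgf m, Lah_ser hY hYs hid hindep hr hmgf k,
      Lah_ser hY hYs hid hindep hr hmgf (m+k), ← pow_add]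
  have hco := congrArg (PowerSeries.coeff n) hmul
  rw [PowerSeries.coeff_mul, Finset.Nat.sum_antidiagonal_eq_sum_range_succ_mk,
    PowerSeries.coeff_mk] at hco
  simp only [PowerSeries.coeff_mk] at hco
  have hn : (n.factorial : ℝ) ≠ 0 := by positivity
  rw [eq_div_iff hn] at hco
  rw [← hco, Finset.sum_mul]
  refine Finset.sum_congr rfl fun i hi => ?_
  rw [mem_range] at hi
  have hle : i ≤ n := Nat.lt_succ_iff.mp hi
  have hfac : ((n.choose i : ℝ)) * (i.factorial : ℝ) * ((n-i).factorial : ℝ)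
      = (n.factorial : ℝ) := by
    exact_mod_cast congrArg (Nat.cast (R := ℝ)) (Nat.choose_mul_factorial_mul_factorial hle)
  rw [div_mul_div_comm, div_mul_eq_mul_div, div_eq_iff (by positivity), ← hfac]
  ring

end PS

section Poly

variable {Ω : Type*} [MeasurableSpace Ω] {μ : Measure Ω} [IsProbabilityMeasure μ]
  {Y : Ω → ℝ} {Ys : ℕ → Ω → ℝ} {r : ℝ}

noncomputable def LahPoly (μ : Measure Ω) (Ys : ℕ → Ω → ℝ) (n : ℕ) : Polynomial ℝ :=
  ∑ i ∈ range (n+1), Polynomial.C (probLah μ Ys n i) * Polynomial.X ^ i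

lemma LahPoly_eval (n : ℕ) (x : ℝ) :
    (LahPoly μ Ys n).eval x = probLahBell μ Ys n x := by
  rw [LahPoly, probLahBell, Polynomial.eval_finset_sum]
  exact Finset.sum_congr rfl fun i _ => by
    rw [Polynomial.eval_mul, Polynomial.eval_C, Polynomial.eval_pow, Polynomial.eval_X]

lemma LahPoly_coeff (hY : Measurable Y) (hYs : ∀ j, Measurable (Ys j))
    (hid : ∀ j, IdentDistrib (Ys j) Y μ μ)
    (hindep : iIndepFun Ys μ) (hr : 0 < r)
    (hmgf : ∀ t : ℝ, |t| < r → Integrable (fun ω => Real.exp (t * Y ω)) μ) (n i : ℕ) :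
    (LahPoly μ Ys n).coeff i = probLah μ Ys n i := by
  rw [LahPoly, Polynomial.finset_sum_coeff]
  simp only [Polynomial.coeff_C_mul, Polynomial.coeff_X_pow]
  rcases le_or_gt i n with h | h
  · rw [Finset.sum_eq_single i]
    · simp
    · intro j _ hji
      rw [if_neg (fun hc => hji hc.symm), mul_zero]
    · intro hi
      exact absurd (mem_range.mpr (by omega)) hi
  · rw [Finset.sum_eq_zero, Lah_vanish hY hYs hid hindep hr hmgf h]
    intro j hj
    rw [mem_range] at hj
    rw [if_neg (by omega), mul_zero]

lemma iteratedDeriv_polyeval (p : Polynomial ℝ) (k : ℕ) :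
    iteratedDeriv k (fun y : ℝ => p.eval y) = fun x => (Polynomial.derivative^[k] p).eval x := by
  induction k with
  | zero => simp [iteratedDeriv_zero]
  | succ k ih =>
    rw [iteratedDeriv_succ, ih]
    funext x
    rw [Function.iterate_succ_apply']
    exact Polynomial.deriv (p := Polynomial.derivative^[k] p)

lemma deriv_formula (hY : Measurable Y) (hYs : ∀ j, Measurable (Ys j))
    (hid : ∀ j, IdentDistrib (Ys j) Y μ μ)
    (hindep : iIndepFun Ys μ) (hr : 0 < r)
    (hmgf : ∀ t : ℝ, |t| < r → Integrable (fun ω => Real.exp (t * Y ω)) μ)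
    (n k : ℕ) (hkn : k ≤ n) (x : ℝ) :
    iteratedDeriv k (fun y => probLahBell μ Ys n y) x = (k.factorial : ℝ) *
      ∑ j ∈ range (n - k + 1),
        (n.choose j : ℝ) * probLahBell μ Ys j x * probLah μ Ys (n - j) k := by
  have hfun : (fun y => probLahBell μ Ys n y) = fun y => (LahPoly μ Ys n).eval y :=
    funext fun y => (LahPoly_eval n y).symm
  rw [hfun, iteratedDeriv_polyeval]
  have hpoly : Polynomial.derivative^[k] (LahPoly μ Ys n)
      = Polynomial.C (k.factorial : ℝ) * ∑ j ∈ range (n-k+1),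
          Polynomial.C ((n.choose j : ℝ) * probLah μ Ys (n-j) k) * LahPoly μ Ys j := by
    ext m
    rw [Polynomial.coeff_iterate_derivative, LahPoly_coeff hY hYs hid hindep hr hmgf n (m+k),
      Polynomial.coeff_C_mul, Polynomial.finset_sum_coeff]
    simp only [Polynomial.coeff_C_mul, LahPoly_coeff hY hYs hid hindep hr hmgf]
    rw [nsmul_eq_mul]
    have hm : (m.factorial : ℝ) ≠ 0 := by positivity
    apply mul_left_cancel₀ hm
    have hdesc : (m.factorial : ℝ) * ((m+k).descFactorial k : ℝ) = ((m+k).factorial : ℝ) := by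
      have h0 := Nat.factorial_mul_descFactorial (show k ≤ m + k by omega)
      rw [show m + k - k = m by omega] at h0
      exact_mod_cast congrArg (Nat.cast (R := ℝ)) h0
    have hsub : range (n-k+1) ⊆ range (n+1) := Finset.range_subset_range.mpr (by omega)
    have hvanish : ∀ j ∈ range (n+1), j ∉ range (n-k+1) →
        (n.choose j : ℝ) * ((m.factorial : ℝ) * probLah μ Ys j m)
          * ((k.factorial : ℝ) * probLah μ Ys (n-j) k) = 0 := by
      intro j hj hj2
      rw [mem_range] at hj hj2
      rw [Lah_vanish hY hYs hid hindep hr hmgf (show n - j < k by omega)]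
      ring
    rw [← mul_assoc, hdesc, key_conv hY hYs hid hindep hr hmgf m k n,
      ← Finset.sum_subset hsub hvanish, Finset.mul_sum, Finset.mul_sum]
    exact Finset.sum_congr rfl fun j _ => by ring
  rw [hpoly]
  simp only [Polynomial.eval_mul, Polynomial.eval_C, Polynomial.eval_finset_sum, LahPoly_eval]
  congr 1
  exact Finset.sum_congr rfl fun j _ => by ring

lemma Lah_one (hid : ∀ j, IdentDistrib (Ys j) Y μ μ) {m : ℕ} (hm : 1 ≤ m) :
    probLah μ Ys m 1 = ∫ ω, asc (Y ω) m ∂μ := by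
  rw [probLah, Finset.sum_range_succ, Finset.sum_range_one]
  have h0 : (fun ω => asc (∑ j ∈ range 0, Ys j ω) m) = fun _ : Ω => (0:ℝ) := by
    funext ω
    rw [Finset.sum_range_zero, asc_zero_eq, if_neg (by omega)]
  have h1 : (fun ω => asc (∑ j ∈ range 1, Ys j ω) m) = fun ω => asc (Ys 0 ω) m := by
    funext ω
    rw [Finset.sum_range_one]
  rw [h0, h1, integral_zero, integral_asc_Ys hid 0 m]
  norm_num

end Poly

theorem statement_11 {Ω : Type*} [MeasurableSpace Ω] (μ : Measure Ω) [IsProbabilityMeasure μ]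
    (Y : Ω → ℝ) (Ys : ℕ → Ω → ℝ)
    (hY : Measurable Y) (hYs : ∀ j, Measurable (Ys j))
    (hid : ∀ j, IdentDistrib (Ys j) Y μ μ)
    (hindep : iIndepFun Ys μ)
    (r : ℝ) (hr : 0 < r)
    (hmgf : ∀ t : ℝ, |t| < r → Integrable (fun ω => Real.exp (t * Y ω)) μ)
    (n k : ℕ) (hkn : k ≤ n) (x : ℝ) :
    (iteratedDeriv k (fun y => probLahBell μ Ys n y) x = (k.factorial : ℝ) *
      ∑ j ∈ Finset.range (n - k + 1),
        (n.choose j : ℝ) * probLahBell μ Ys j x * probLah μ Ys (n - j) k) ∧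
    (1 ≤ n → deriv (fun y => probLahBell μ Ys n y) x =
      ∑ j ∈ Finset.range n,
        (n.choose j : ℝ) * (∫ ω, asc (Y ω) (n - j) ∂μ) * probLahBell μ Ys j x) := by
  constructor
  · exact deriv_formula hY hYs hid hindep hr hmgf n k hkn x
  · intro hn
    rw [← iteratedDeriv_one, deriv_formula hY hYs hid hindep hr hmgf n 1 hn x,
      Nat.factorial_one, Nat.cast_one, one_mul, show n - 1 + 1 = n by omega]
    refine Finset.sum_congr rfl fun j hj => ?_
    rw [mem_range] at hj
    rw [Lah_one hid (show 1 ≤ n - j by omega)]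
    ring
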